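/- Let G be a group and N a normal subgroup. If N satisfies the maximal condition on G-invariant subgroups (every ascending chain of normal-in-G subgroups of N stabilizes) and G/N satisfies the weak maximal condition on normal subgroups (there is no ascending chain (M_i)_{i∈ℕ} of normal subgroups of G/N with each index |M_{i+1} : M_i| infinite), then G satisfies the weak maximal condition on normal subgroups. -/

import Mathlib

/-- A group `X` satisfies the weak maximal condition on normal subgroups if there is no
strictly ascending sequence of normal subgroups, each of infinite index in the next. -/
def WeakMaxNormal (X : Type*) [Group X] : Prop :=
  ¬ ∃ f : ℕ → Subgroup X, StrictMono f ∧ (∀ n, (f n).Normal) ∧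
    ∀ n, (f n).relIndex (f (n + 1)) = 0

lemma Subgroup.Normal.inf' {G : Type*} [Group G] {H K : Subgroup G}
    (hH : H.Normal) (hK : K.Normal) : (H ⊓ K).Normal :=
  ⟨fun x ⟨hx1, hx2⟩ g => ⟨hH.conj_mem x hx1 g, hK.conj_mem x hx2 g⟩⟩

/-- Dedekind's modular law for subgroups: if `H ≤ K` then `(H ⊔ N) ⊓ K ≤ H ⊔ (N ⊓ K)`. -/
lemma dedekind_aux {G : Type*} [Group G] {H K : Subgroup G} (N : Subgroup G) [N.Normal]
    (hHK : H ≤ K) : (H ⊔ N) ⊓ K ≤ H ⊔ (N ⊓ K) := by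
  intro x hx
  obtain ⟨hx1, hx2⟩ := hx
  have : (x : G) ∈ (↑(H ⊔ N) : Set G) := hx1
  rw [Subgroup.mul_normal] at this
  obtain ⟨h, hh, n, hn, rfl⟩ := this
  have hnK : n ∈ K := by
    have := K.mul_mem (K.inv_mem (hHK hh)) hx2
    simpa using this
  exact Subgroup.mul_mem _ (Subgroup.mem_sup_left hh)
    (Subgroup.mem_sup_right ⟨hn, hnK⟩)

/-- If `N ⊴ G` satisfies the maximal condition on `G`-invariant subgroups and `G/N`
satisfies the weak maximal condition on normal subgroups, then `G` satisfies the weak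
maximal condition on normal subgroups. -/
theorem stmt_5 {G : Type*} [Group G] (N : Subgroup G) (hN : N.Normal)
    (hmaxN : ∀ f : ℕ →o Subgroup G, (∀ n, f n ≤ N ∧ (f n).Normal) →
      ∃ n, ∀ m, n ≤ m → f m = f n)
    (hGN : WeakMaxNormal (G ⧸ N)) :
    WeakMaxNormal G := by
  rintro ⟨f, hmono, hnorm, hrel⟩
  -- the chain f n ⊓ N stabilizes
  obtain ⟨n₀, hn₀⟩ := hmaxN ⟨fun n => f n ⊓ N, fun a b hab =>
      inf_le_inf_right N (hmono.monotone hab)⟩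
    (fun n => ⟨inf_le_right, Subgroup.Normal.inf' (hnorm n) hN⟩)
  -- push forward to G/N
  let π := QuotientGroup.mk' N
  have hπsurj : Function.Surjective π := QuotientGroup.mk'_surjective N
  set M : ℕ → Subgroup (G ⧸ N) := fun n => (f (n₀ + n)).map π with hM
  have hMle : ∀ n, M n ≤ M (n + 1) := fun n =>
    Subgroup.map_mono (hmono.monotone (by omega))
  have key : ∀ n, (M n).relIndex (M (n + 1)) = 0 := by
    intro n
    set k := n₀ + n with hk
    have hcm : (M n).comap π = f k ⊔ N := by
      rw [hM]
      rw [Subgroup.comap_map_eq]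
      congr 1
      exact QuotientGroup.ker_mk' N
    have h1 : ((M n).comap π).relIndex (f (k + 1)) = (M n).relIndex (M (n + 1)) := by
      rw [Subgroup.relIndex_comap]
      have hkk : k + 1 = n₀ + (n + 1) := by omega
      rw [hkk]
    rw [← h1, hcm]
    -- (f k ⊔ N) ⊓ f (k+1) = f k
    have hstab : N ⊓ f (k + 1) = N ⊓ f k := by
      have h1 := hn₀ k (by omega)
      have h2 := hn₀ (k + 1) (by omega)
      change f k ⊓ N = f n₀ ⊓ N at h1
      change f (k + 1) ⊓ N = f n₀ ⊓ N at h2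
      rw [inf_comm, h2, ← h1, inf_comm]
    have hinf : (f k ⊔ N) ⊓ f (k + 1) = f k := by
      apply le_antisymm
      · refine le_trans (dedekind_aux N (hmono.monotone (by omega))) ?_
        rw [hstab]
        exact sup_le le_rfl (le_trans inf_le_right le_rfl) |>.trans_eq rfl
      · exact le_inf (le_trans le_sup_left le_rfl) (hmono.monotone (by omega))
    rw [← Subgroup.inf_relIndex_right, hinf]
    exact hrel k
  have hMsm : StrictMono M := by
    apply strictMono_nat_of_lt_succ
    intro n
    refine lt_of_le_of_ne (hMle n) ?_
    intro heq
    have := key n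
    rw [← heq, Subgroup.relIndex_self] at this
    exact one_ne_zero this
  exact hGN ⟨M, hMsm, fun n => Subgroup.Normal.map (hnorm _) π hπsurj, key⟩
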